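/- arXiv:1303.7327 — 4 statements merged into one kernel-verified Lean document; each statement's English description precedes it below -/
import Mathlib

section
/- Let σ be a consistent permutation, φ a modal CNF formula, and M, M' pointed Kripke models such that M ,→σ M'. Then M ⊨ φ if and only if M' ⊨ σ(φ). -/
namespace ModalSym

inductive Lit (Atom : Type) : Type
  | pos (a : Atom) : Lit Atom
  | neg (a : Atom) : Lit Atom
  deriving DecidableEq

namespace Lit
def flip {Atom : Type} : Lit Atom → Lit Atom
  | pos a => neg a
  | neg a => pos a
def atom {Atom : Type} : Lit Atom → Atom
  | pos a => a
  | neg a => a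
end Lit

/-- A permutation `σ` of literals is consistent when it commutes with negation. -/
def Consistent {Atom : Type} (σ : Lit Atom → Lit Atom) : Prop :=
  ∀ l, σ l.flip = (σ l).flip

/-- Modal CNF clauses of modal depth at most `n`: a clause is a finite set whose
elements are literals or modal literals `□ₘ C` / `¬□ₘ C` (`Bool` gives the polarity,
`true` for `□ₘ C`). -/
@[reducible] def ClauseT (Atom Mod : Type) : ℕ → Type
  | 0 => Finset (Lit Atom)
  | n+1 => Finset (Lit Atom ⊕ Bool × Mod × ClauseT Atom Mod n)

instance instDecEqClauseT {Atom Mod : Type} [DecidableEq Atom] [DecidableEq Mod] :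
    ∀ n, DecidableEq (ClauseT Atom Mod n)
  | 0 => inferInstanceAs (DecidableEq (Finset (Lit Atom)))
  | n+1 =>
    letI := instDecEqClauseT (Atom := Atom) (Mod := Mod) n
    inferInstanceAs (DecidableEq (Finset (Lit Atom ⊕ Bool × Mod × ClauseT Atom Mod n)))

/-- A modal CNF formula (of modal depth at most `n`): a finite set of clauses. -/
@[reducible] def FormT (Atom Mod : Type) (n : ℕ) : Type := Finset (ClauseT Atom Mod n)

/-- A pointed Kripke model. -/
structure KModel (Atom Mod : Type) : Type 1 where
  W : Type
  pt : W
  V : W → Set Atom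
  R : Mod → W → W → Prop

def satLit {Atom : Type} (S : Set Atom) : Lit Atom → Prop
  | .pos a => a ∈ S
  | .neg a => a ∉ S

def satClause {Atom Mod : Type} (M : KModel Atom Mod) :
    ∀ n, ClauseT Atom Mod n → M.W → Prop
  | 0, C, v => ∃ l ∈ C, satLit (M.V v) l
  | n+1, C, v => ∃ e ∈ C,
      match e with
      | Sum.inl l => satLit (M.V v) l
      | Sum.inr (b, m, C') =>
          cond b (∀ u, M.R m v u → satClause M n C' u)
                 (¬ ∀ u, M.R m v u → satClause M n C' u)

/-- `M ⊨ φ`. -/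
def satForm {Atom Mod : Type} (M : KModel Atom Mod) {n : ℕ} (φ : FormT Atom Mod n) : Prop :=
  ∀ C ∈ φ, satClause M n C M.pt

/-- `L_S`, the complete consistent set of literals generated by `S ⊆ Atom`. -/
def genLits {Atom : Type} (S : Set Atom) : Set (Lit Atom) := {l | satLit S l}

def permClause {Atom Mod : Type} [DecidableEq Atom] [DecidableEq Mod]
    (σ : Lit Atom → Lit Atom) : ∀ n, ClauseT Atom Mod n → ClauseT Atom Mod n
  | 0, C => C.image σ
  | n+1, C => C.image fun e =>
      match e with
      | Sum.inl l => Sum.inl (σ l)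
      | Sum.inr (b, m, C') => Sum.inr (b, m, permClause σ n C')

/-- The action `σ(φ)` of a permutation of literals on a modal CNF formula. -/
def permForm {Atom Mod : Type} [DecidableEq Atom] [DecidableEq Mod]
    (σ : Lit Atom → Lit Atom) {n : ℕ} (φ : FormT Atom Mod n) : FormT Atom Mod n :=
  φ.image (permClause σ n)

/-- The permuted model `σ(M)`, with `V'(v) = σ(L_{V(v)}) ∩ Atom`. -/
def permModel {Atom Mod : Type} (σ : Lit Atom → Lit Atom) (M : KModel Atom Mod) :
    KModel Atom Mod where
  W := M.W
  pt := M.pt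
  V := fun v => {a | Lit.pos a ∈ σ '' genLits (M.V v)}
  R := M.R

def IsBisim {Atom Mod : Type} (M M' : KModel Atom Mod) (Z : M.W → M'.W → Prop) : Prop :=
  Z M.pt M'.pt ∧
  (∀ v v', Z v v' → ∀ a, a ∈ M.V v ↔ a ∈ M'.V v') ∧
  (∀ v v' m u, Z v v' → M.R m v u → ∃ u', M'.R m v' u' ∧ Z u u') ∧
  (∀ v v' m u', Z v v' → M'.R m v' u' → ∃ u, M.R m v u ∧ Z u u')

def Bisimilar {Atom Mod : Type} (M M' : KModel Atom Mod) : Prop := ∃ Z, IsBisim M M' Z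

def IsSigmaSim {Atom Mod : Type} (σ : Lit Atom → Lit Atom) (M M' : KModel Atom Mod)
    (Z : M.W → M'.W → Prop) : Prop :=
  Z M.pt M'.pt ∧
  (∀ v v', Z v v' → ∀ l, l ∈ genLits (M.V v) ↔ σ l ∈ genLits (M'.V v')) ∧
  (∀ v v' m u, Z v v' → M.R m v u → ∃ u', M'.R m v' u' ∧ Z u u') ∧
  (∀ v v' m u', Z v v' → M'.R m v' u' → ∃ u, M.R m v u ∧ Z u u')

/-- `M ,→σ M'`. -/
def SigmaSim {Atom Mod : Type} (σ : Lit Atom → Lit Atom) (M M' : KModel Atom Mod) : Prop :=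
  ∃ Z, IsSigmaSim σ M M' Z

/-- `IsPathFrom M v p`: `p` is a valid path (list of (modality, state) steps) starting at `v`. -/
def IsPathFrom {Atom Mod : Type} (M : KModel Atom Mod) : M.W → List (Mod × M.W) → Prop
  | _, [] => True
  | v, s :: rest => M.R s.1 v s.2 ∧ IsPathFrom M s.2 rest

def pathLast {Atom Mod : Type} (M : KModel Atom Mod) : M.W → List (Mod × M.W) → M.W
  | v, [] => v
  | _, s :: rest => pathLast M s.2 rest

/-- A tree model: every state is the last state of exactly one rooted path. -/
def IsTree {Atom Mod : Type} (M : KModel Atom Mod) : Prop :=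
  ∀ v : M.W, ∃! p : List (Mod × M.W), IsPathFrom M M.pt p ∧ pathLast M M.pt p = v

/-- The depth of a state: the (minimal) length of a rooted path leading to it. -/
noncomputable def depth {Atom Mod : Type} (M : KModel Atom Mod) (v : M.W) : ℕ :=
  sInf {d | ∃ p, IsPathFrom M M.pt p ∧ pathLast M M.pt p = v ∧ p.length = d}

/-- The unravelling `T(M)`. -/
def unravel {Atom Mod : Type} (M : KModel Atom Mod) : KModel Atom Mod where
  W := {p : List (Mod × M.W) // IsPathFrom M M.pt p}
  pt := ⟨[], trivial⟩
  V := fun p => M.V (pathLast M M.pt p.1)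
  R := fun m p p' => ∃ v, p'.1 = p.1 ++ [(m, v)]

/-- `head(σ̄)`: the first permutation of the sequence, identity for the empty sequence. -/
def headP {Atom : Type} (σs : List (Lit Atom → Lit Atom)) : Lit Atom → Lit Atom :=
  σs.headD id

def lpermClause {Atom Mod : Type} [DecidableEq Atom] [DecidableEq Mod]
    (σs : List (Lit Atom → Lit Atom)) : ∀ n, ClauseT Atom Mod n → ClauseT Atom Mod n
  | 0, C => C.image (headP σs)
  | n+1, C => C.image fun e =>
      match e with
      | Sum.inl l => Sum.inl (headP σs l)
      | Sum.inr (b, m, C') => Sum.inr (b, m, lpermClause σs.tail n C')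

/-- The action `σ̄(φ)` of a permutation sequence on a modal CNF formula. -/
def lpermForm {Atom Mod : Type} [DecidableEq Atom] [DecidableEq Mod]
    (σs : List (Lit Atom → Lit Atom)) {n : ℕ} (φ : FormT Atom Mod n) : FormT Atom Mod n :=
  φ.image (lpermClause σs n)

/-- The layered permuted model `σ̄(M)` (meaningful on tree models):
at a state of depth `d` the permutation `head(σ̄_{d+1})` is used. -/
noncomputable def lpermModel {Atom Mod : Type} (σs : List (Lit Atom → Lit Atom))
    (M : KModel Atom Mod) : KModel Atom Mod where
  W := M.W
  pt := M.pt
  V := fun v => {a | Lit.pos a ∈ headP (σs.drop (depth M v)) '' genLits (M.V v)}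
  R := M.R

def IsLSim {Atom Mod : Type} (σs : List (Lit Atom → Lit Atom)) (M M' : KModel Atom Mod)
    (Z : ℕ → M.W → M'.W → Prop) : Prop :=
  Z 0 M.pt M'.pt ∧
  (∀ i v v', Z i v v' →
    ∀ l, l ∈ genLits (M.V v) ↔ headP (σs.drop i) l ∈ genLits (M'.V v')) ∧
  (∀ i v v' m u, Z i v v' → M.R m v u → ∃ u', M'.R m v' u' ∧ Z (i+1) u u') ∧
  (∀ i v v' m u', Z i v v' → M'.R m v' u' → ∃ u, M.R m v u ∧ Z (i+1) u u')

/-- `M ,→σ̄ M'`. -/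
def LSim {Atom Mod : Type} (σs : List (Lit Atom → Lit Atom)) (M M' : KModel Atom Mod) : Prop :=
  ∃ Z, IsLSim σs M M' Z

/-- `Mod_C(φ)`: the models in the class `𝒞` satisfying `φ`. -/
def ModC {Atom Mod : Type} (𝒞 : Set (KModel Atom Mod)) {n : ℕ} (φ : FormT Atom Mod n) :
    Set (KModel Atom Mod) := {M ∈ 𝒞 | satForm M φ}

/-- `φ ⊨_C ψ`. -/
def Entails {Atom Mod : Type} (𝒞 : Set (KModel Atom Mod)) {n₁ n₂ : ℕ}
    (φ : FormT Atom Mod n₁) (ψ : FormT Atom Mod n₂) : Prop :=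
  ModC 𝒞 φ ⊆ ModC 𝒞 ψ


lemma satClause_perm_iff {Atom Mod : Type} [DecidableEq Atom] [DecidableEq Mod]
    (σ : Lit Atom → Lit Atom) (M M' : KModel Atom Mod) (Z : M.W → M'.W → Prop)
    (hZ : IsSigmaSim σ M M' Z) :
    ∀ n (C : ClauseT Atom Mod n) (v : M.W) (v' : M'.W), Z v v' →
      (satClause M n C v ↔ satClause M' n (permClause σ n C) v') := by
  obtain ⟨-, hharm, hzig, hzag⟩ := hZ
  intro n
  induction n with
  | zero =>
    intro C v v' hvv'
    constructor
    · rintro ⟨l, hl, hsat⟩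
      exact ⟨σ l, Finset.mem_image_of_mem σ hl, (hharm v v' hvv' l).1 hsat⟩
    · rintro ⟨l', hl', hsat⟩
      obtain ⟨l, hl, rfl⟩ := Finset.mem_image.1 hl'
      exact ⟨l, hl, (hharm v v' hvv' l).2 hsat⟩
  | succ n ih =>
    intro C v v' hvv'
    have key : ∀ (e : Lit Atom ⊕ Bool × Mod × ClauseT Atom Mod n),
        ((match e with
          | Sum.inl l => satLit (M.V v) l
          | Sum.inr (b, m, C') =>
              cond b (∀ u, M.R m v u → satClause M n C' u)
                     (¬ ∀ u, M.R m v u → satClause M n C' u)) ↔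
         (match (match e with
          | Sum.inl l => Sum.inl (σ l)
          | Sum.inr (b, m, C') => Sum.inr (b, m, permClause σ n C')) with
          | Sum.inl l => satLit (M'.V v') l
          | Sum.inr (b, m, C') =>
              cond b (∀ u, M'.R m v' u → satClause M' n C' u)
                     (¬ ∀ u, M'.R m v' u → satClause M' n C' u))) := by
      rintro (l | ⟨b, m, C'⟩)
      · exact hharm v v' hvv' l
      · have box : (∀ u, M.R m v u → satClause M n C' u) ↔
            (∀ u', M'.R m v' u' → satClause M' n (permClause σ n C') u') := by
          constructor
          · intro hall u' hu'
            obtain ⟨u, hu, hZu⟩ := hzag v v' m u' hvv' hu'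
            exact (ih C' u u' hZu).1 (hall u hu)
          · intro hall u hu
            obtain ⟨u', hu', hZu⟩ := hzig v v' m u hvv' hu
            exact (ih C' u u' hZu).2 (hall u' hu')
        cases b
        · simpa using not_congr box
        · simpa using box
    constructor
    · rintro ⟨e, he, hsat⟩
      refine ⟨_, Finset.mem_image_of_mem _ he, ?_⟩
      exact (key e).1 hsat
    · rintro ⟨e', he', hsat⟩
      obtain ⟨e, he, rfl⟩ := Finset.mem_image.1 he'
      exact ⟨e, he, (key e).2 hsat⟩

/-- a `σ`-simulation transfers `φ` to `σ(φ)`. -/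
theorem sigmaSim_sat_iff {Atom Mod : Type} [Countable Atom] [Countable Mod]
    [DecidableEq Atom] [DecidableEq Mod]
    (σ : Lit Atom → Lit Atom) (hbij : Function.Bijective σ) (hcons : Consistent σ)
    {n : ℕ} (φ : FormT Atom Mod n)
    (M M' : KModel Atom Mod) (h : SigmaSim σ M M') :
    satForm M φ ↔ satForm M' (permForm σ φ) := by
  obtain ⟨Z, hZ⟩ := h
  have hroot := hZ.1
  constructor
  · intro hsat C' hC'
    obtain ⟨C, hC, rfl⟩ := Finset.mem_image.1 hC'
    exact (satClause_perm_iff σ M M' Z hZ n C _ _ hroot).1 (hsat C hC)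
  · intro hsat C hC
    exact (satClause_perm_iff σ M M' Z hZ n C _ _ hroot).2
      (hsat _ (Finset.mem_image_of_mem _ hC))

end ModalSym
end

section
/- Let σ be a consistent permutation, M a pointed Kripke model and φ a modal CNF formula. Then M ⊨ φ if and only if σ(M) ⊨ σ(φ). -/
namespace ModalSym

lemma satLit_flip {Atom : Type} (S : Set Atom) (l : Lit Atom) :
    satLit S l.flip ↔ ¬ satLit S l := by
  cases l <;> simp [satLit, Lit.flip]

lemma satLit_perm {Atom Mod : Type} (σ : Lit Atom → Lit Atom)
    (hinj : Function.Injective σ) (hcons : Consistent σ)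
    (M : KModel Atom Mod) (v : M.W) (l : Lit Atom) :
    satLit (M.V v) l ↔ satLit ((permModel σ M).V v) (σ l) := by
  rcases h : σ l with b | b
  · show satLit (M.V v) l ↔ Lit.pos b ∈ σ '' genLits (M.V v)
    constructor
    · intro hl; exact ⟨l, hl, h⟩
    · rintro ⟨l', hl', hσ⟩
      rw [← h] at hσ; rwa [hinj hσ] at hl'
  · show satLit (M.V v) l ↔ Lit.pos b ∉ σ '' genLits (M.V v)
    have hb : σ l.flip = Lit.pos b := by rw [hcons, h]; rfl
    constructor
    · rintro hl ⟨l', hl', hσ⟩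
      rw [← hb] at hσ
      rw [hinj hσ] at hl'
      exact (satLit_flip _ _).mp hl' hl
    · intro hni
      by_contra hl
      exact hni ⟨l.flip, (satLit_flip _ _).mpr hl, hb⟩

lemma satClause_perm {Atom Mod : Type} [DecidableEq Atom] [DecidableEq Mod]
    (σ : Lit Atom → Lit Atom) (hinj : Function.Injective σ) (hcons : Consistent σ)
    (M : KModel Atom Mod) :
    ∀ n (C : ClauseT Atom Mod n) (v : M.W),
      satClause M n C v ↔ satClause (permModel σ M) n (permClause σ n C) v
  | 0, C, v => by
    simp only [satClause, permClause, Finset.mem_image]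
    constructor
    · rintro ⟨l, hl, hs⟩
      exact ⟨σ l, ⟨l, hl, rfl⟩, (satLit_perm σ hinj hcons M v l).mp hs⟩
    · rintro ⟨_, ⟨l, hl, rfl⟩, hs⟩
      exact ⟨l, hl, (satLit_perm σ hinj hcons M v l).mpr hs⟩
  | n+1, C, v => by
    simp only [satClause, permClause, Finset.mem_image]
    constructor
    · rintro ⟨e, he, hs⟩
      refine ⟨_, ⟨e, he, rfl⟩, ?_⟩
      rcases e with l | ⟨b, m, C'⟩
      · exact (satLit_perm σ hinj hcons M v l).mp hs
      · cases b
        · exact fun hall => hs fun u hu =>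
            (satClause_perm σ hinj hcons M n C' u).mpr (hall u hu)
        · exact fun u hu => (satClause_perm σ hinj hcons M n C' u).mp (hs u hu)
    · rintro ⟨_, ⟨e, he, rfl⟩, hs⟩
      refine ⟨e, he, ?_⟩
      rcases e with l | ⟨b, m, C'⟩
      · exact (satLit_perm σ hinj hcons M v l).mpr hs
      · cases b
        · exact fun hall => hs fun u hu =>
            (satClause_perm σ hinj hcons M n C' u).mp (hall u hu)
        · exact fun u hu => (satClause_perm σ hinj hcons M n C' u).mpr (hs u hu)

/-- `M ⊨ φ` iff `σ(M) ⊨ σ(φ)`. -/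
theorem sat_iff_permModel_permForm {Atom Mod : Type} [Countable Atom] [Countable Mod]
    [DecidableEq Atom] [DecidableEq Mod]
    (σ : Lit Atom → Lit Atom) (hbij : Function.Bijective σ) (hcons : Consistent σ)
    (M : KModel Atom Mod) {n : ℕ} (φ : FormT Atom Mod n) :
    satForm M φ ↔ satForm (permModel σ M) (permForm σ φ) := by
  constructor
  · intro h C' hC'
    obtain ⟨C, hC, rfl⟩ := Finset.mem_image.mp hC'
    exact (satClause_perm σ hbij.1 hcons M n C M.pt).mp (h C hC)
  · intro h C hC
    exact (satClause_perm σ hbij.1 hcons M n C M.pt).mpr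
      (h _ (Finset.mem_image_of_mem _ hC))

end ModalSym
end

section
/- For every consistent permutation sequence σ̄ and every tree model M, there is a σ̄-simulation between M and the permuted model σ̄(M), i.e. M ,→σ̄ σ̄(M). -/
namespace ModalSym

lemma flip_mem_genLits {Atom : Type} (S : Set Atom) (l : Lit Atom) :
    l.flip ∈ genLits S ↔ l ∉ genLits S := by
  cases l with
  | pos a => simp [genLits, Lit.flip, satLit]
  | neg a => simp [genLits, Lit.flip, satLit, not_not]

lemma harmony_lemma {Atom : Type} (σ : Lit Atom → Lit Atom)
    (hbij : Function.Bijective σ) (hcons : Consistent σ) (S : Set Atom) (l : Lit Atom) :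
    l ∈ genLits S ↔ σ l ∈ genLits {a | Lit.pos a ∈ σ '' genLits S} := by
  set T : Set (Lit Atom) := σ '' genLits S with hT
  have hmemT : ∀ l', σ l' ∈ T ↔ l' ∈ genLits S := by
    intro l'
    constructor
    · rintro ⟨l₀, hl₀, heq⟩; rwa [hbij.1 heq] at hl₀
    · exact fun h => ⟨l', h, rfl⟩
  have key : ∀ l', l' ∈ genLits {a | Lit.pos a ∈ T} ↔ l' ∈ T := by
    intro l'
    cases l' with
    | pos a => simp [genLits, satLit]
    | neg a =>
        have : ∃ l₀, σ l₀ = Lit.pos a := hbij.2 _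
        obtain ⟨l₀, hl₀⟩ := this
        have hflip : σ l₀.flip = Lit.neg a := by rw [hcons, hl₀]; rfl
        simp only [genLits, satLit, Set.mem_setOf_eq]
        rw [← hl₀, ← hflip, hmemT, hmemT, flip_mem_genLits]
  rw [key, hmemT]

lemma headP_bij_cons {Atom : Type} (σs : List (Lit Atom → Lit Atom))
    (hbij : ∀ σ ∈ σs, Function.Bijective σ) (hcons : ∀ σ ∈ σs, Consistent σ) :
    Function.Bijective (headP σs) ∧ Consistent (headP σs) := by
  cases σs with
  | nil => exact ⟨Function.bijective_id, fun l => rfl⟩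
  | cons σ rest =>
      exact ⟨hbij σ List.mem_cons_self, hcons σ List.mem_cons_self⟩

lemma isPathFrom_append {Atom Mod : Type} (M : KModel Atom Mod) (m : Mod) (u : M.W) :
    ∀ (p : List (Mod × M.W)) (w : M.W), IsPathFrom M w p →
      M.R m (pathLast M w p) u →
      IsPathFrom M w (p ++ [(m, u)]) ∧ pathLast M w (p ++ [(m, u)]) = u := by
  intro p
  induction p with
  | nil => intro w _ hR; exact ⟨⟨hR, trivial⟩, rfl⟩
  | cons s rest ih =>
      intro w hp hR
      obtain ⟨h1, h2⟩ := hp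
      obtain ⟨ha, hb⟩ := ih s.2 h2 hR
      exact ⟨⟨h1, ha⟩, hb⟩

lemma depth_eq_of_path {Atom Mod : Type} (M : KModel Atom Mod) (htree : IsTree M)
    (v : M.W) (p : List (Mod × M.W)) (hp : IsPathFrom M M.pt p)
    (hl : pathLast M M.pt p = v) : depth M v = p.length := by
  obtain ⟨q, ⟨hq, huniq⟩⟩ := htree v
  have hpq : p = q := huniq p ⟨hp, hl⟩
  subst hpq
  have : {d | ∃ p', IsPathFrom M M.pt p' ∧ pathLast M M.pt p' = v ∧ p'.length = d}
      = {p.length} := by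
    ext d
    simp only [Set.mem_setOf_eq, Set.mem_singleton_iff]
    constructor
    · rintro ⟨p', hp', hl', hlen⟩
      rw [huniq p' ⟨hp', hl'⟩] at hlen
      exact hlen.symm
    · rintro rfl; exact ⟨p, hp, hl, rfl⟩
  rw [depth, this, csInf_singleton]

/-- `M ,→σ̄ σ̄(M)` for every consistent permutation sequence `σ̄` and
tree model `M`. -/
theorem lsim_lpermModel {Atom Mod : Type} [Countable Atom] [Countable Mod]
    (σs : List (Lit Atom → Lit Atom))
    (hbij : ∀ σ ∈ σs, Function.Bijective σ) (hcons : ∀ σ ∈ σs, Consistent σ)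
    (M : KModel Atom Mod) (htree : IsTree M) :
    LSim σs M (lpermModel σs M) := by
  refine ⟨fun i v v' => v' = v ∧ depth M v = i, ?_, ?_, ?_, ?_⟩
  · exact ⟨rfl, depth_eq_of_path M htree M.pt [] trivial rfl⟩
  · rintro i v v' ⟨rfl, hd⟩ l
    obtain ⟨hb, hc⟩ := headP_bij_cons (σs.drop i)
      (fun σ hσ => hbij σ (List.mem_of_mem_drop hσ))
      (fun σ hσ => hcons σ (List.mem_of_mem_drop hσ))
    have := harmony_lemma (headP (σs.drop i)) hb hc (M.V v') l
    simpa [lpermModel, hd] using this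
  · rintro i v v' m u ⟨rfl, hd⟩ hR
    refine ⟨u, hR, rfl, ?_⟩
    obtain ⟨p, ⟨⟨hp, hl⟩, _⟩⟩ := htree v'
    have hdp := depth_eq_of_path M htree v' p hp hl
    obtain ⟨hp', hl'⟩ := isPathFrom_append M m u p M.pt hp (hl ▸ hR)
    have := depth_eq_of_path M htree u _ hp' hl'
    simp only [List.length_append, List.length_cons, List.length_nil] at this
    omega
  · rintro i v v' m u' ⟨rfl, hd⟩ hR
    refine ⟨u', hR, rfl, ?_⟩
    obtain ⟨p, ⟨⟨hp, hl⟩, _⟩⟩ := htree v'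
    have hdp := depth_eq_of_path M htree v' p hp hl
    obtain ⟨hp', hl'⟩ := isPathFrom_append M m u' p M.pt hp (hl ▸ hR)
    have := depth_eq_of_path M htree u' _ hp' hl'
    simp only [List.length_append, List.length_cons, List.length_nil] at this
    omega

end ModalSym
end

section
/- Let σ̄ be a consistent permutation sequence and M, M' pointed Kripke models such that M ,→σ̄ M'. Then for every modal CNF formula φ, M ⊨ φ if and only if M' ⊨ σ̄(φ). -/
namespace ModalSym

theorem lsim_clause {Atom Mod : Type} [DecidableEq Atom] [DecidableEq Mod]
    (σs : List (Lit Atom → Lit Atom))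
    (M M' : KModel Atom Mod) (Z : ℕ → M.W → M'.W → Prop)
    (hZ : IsLSim σs M M' Z) :
    ∀ (n : ℕ) (C : ClauseT Atom Mod n) (i : ℕ) (v : M.W) (v' : M'.W), Z i v v' →
      (satClause M n C v ↔ satClause M' n (lpermClause (σs.drop i) n C) v') := by
  obtain ⟨-, hharm, hzig, hzag⟩ := hZ
  intro n
  induction n with
  | zero =>
    intro C i v v' hvv'
    constructor
    · rintro ⟨l, hl, hsat⟩
      exact ⟨headP (σs.drop i) l, Finset.mem_image_of_mem _ hl,
        (hharm i v v' hvv' l).mp hsat⟩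
    · rintro ⟨l', hl', hsat⟩
      obtain ⟨l, hl, rfl⟩ := Finset.mem_image.mp hl'
      exact ⟨l, hl, (hharm i v v' hvv' l).mpr hsat⟩
  | succ n ih =>
    intro C i v v' hvv'
    have htail : (σs.drop i).tail = σs.drop (i+1) := by
      rw [← List.drop_one, List.drop_drop]
    have hbox : ∀ (m : Mod) (C' : ClauseT Atom Mod n),
        (∀ u, M.R m v u → satClause M n C' u) ↔
        (∀ u', M'.R m v' u' → satClause M' n (lpermClause (σs.drop (i+1)) n C') u') := by
      intro m C'
      constructor
      · intro hall u' hru'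
        obtain ⟨u, hru, hZu⟩ := hzag i v v' m u' hvv' hru'
        exact (ih C' (i+1) u u' hZu).mp (hall u hru)
      · intro hall u hru
        obtain ⟨u', hru', hZu⟩ := hzig i v v' m u hvv' hru
        exact (ih C' (i+1) u u' hZu).mpr (hall u' hru')
    constructor
    · rintro ⟨e, he, hsat⟩
      refine ⟨_, Finset.mem_image_of_mem _ he, ?_⟩
      match e with
      | Sum.inl l => exact (hharm i v v' hvv' l).mp hsat
      | Sum.inr (true, m, C') =>
        simpa [htail] using (hbox m C').mp hsat
      | Sum.inr (false, m, C') =>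
        simpa [htail] using (hbox m C').not.mp hsat
    · rintro ⟨e', he', hsat⟩
      obtain ⟨e, he, rfl⟩ := Finset.mem_image.mp he'
      refine ⟨e, he, ?_⟩
      match e with
      | Sum.inl l => exact (hharm i v v' hvv' l).mpr hsat
      | Sum.inr (true, m, C') =>
        exact (hbox m C').mpr (by simpa [htail] using hsat)
      | Sum.inr (false, m, C') =>
        exact (hbox m C').not.mpr (by simpa [htail] using hsat)

/-- a `σ̄`-simulation transfers `φ` to `σ̄(φ)`. -/
theorem lsim_sat_iff {Atom Mod : Type} [Countable Atom] [Countable Mod]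
    [DecidableEq Atom] [DecidableEq Mod]
    (σs : List (Lit Atom → Lit Atom))
    (hbij : ∀ σ ∈ σs, Function.Bijective σ) (hcons : ∀ σ ∈ σs, Consistent σ)
    (M M' : KModel Atom Mod) (h : LSim σs M M') :
    ∀ {n : ℕ} (φ : FormT Atom Mod n), satForm M φ ↔ satForm M' (lpermForm σs φ) := by
  obtain ⟨Z, hZ⟩ := h
  intro n φ
  have hroot := hZ.1
  constructor
  · intro hsat C' hC'
    obtain ⟨C, hC, rfl⟩ := Finset.mem_image.mp hC'
    have := (lsim_clause σs M M' Z hZ n C 0 M.pt M'.pt hroot).mp (hsat C hC)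
    simpa using this
  · intro hsat C hC
    refine (lsim_clause σs M M' Z hZ n C 0 M.pt M'.pt hroot).mpr ?_
    simpa using hsat _ (Finset.mem_image_of_mem _ hC)

end ModalSym
end
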